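/- Let k be an algebraically closed field of characteristic 0, d ≥ 2, and let f₁, f₂ ∈ R_d be binary forms such that every linear combination αf₁ + βf₂ has a linear factor of multiplicity at least [d/2]+1. Then there is a single nonzero linear form l such that l^{[d/2]+1} divides both f₁ and f₂. -/

import Mathlib

open MvPolynomial

section Stmt13Aux

variable {k : Type*} [Field k]

private lemma top_ne_zero13 {φ : MvPolynomial (Fin 2) k} (h : φ ≠ 0) :
    homogeneousComponent φ.totalDegree φ ≠ 0 := by
  obtain ⟨s, hs, hd⟩ := Finset.exists_mem_eq_sup φ.support
      (support_nonempty.mpr h) fun m : Fin 2 →₀ ℕ => m.sum fun _ e => e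
  intro h0
  have hc : coeff s φ ≠ 0 := mem_support_iff.mp hs
  have h2 := coeff_homogeneousComponent (σ := Fin 2) (R := k) φ.totalDegree φ s
  rw [h0, coeff_zero, if_pos] at h2
  · exact hc h2.symm
  · show s.degree = φ.totalDegree
    rw [MvPolynomial.totalDegree, hd]
    simp [Finsupp.degree, Finsupp.sum]
    rfl

private lemma sub_top_lt13 {φ : MvPolynomial (Fin 2) k}
    (h : φ - homogeneousComponent φ.totalDegree φ ≠ 0) :
    (φ - homogeneousComponent φ.totalDegree φ).totalDegree < φ.totalDegree := by
  set A := homogeneousComponent φ.totalDegree φ with hA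
  have hle : (φ - A).totalDegree ≤ φ.totalDegree := by
    refine (totalDegree_sub φ A).trans ?_
    exact max_le le_rfl (homogeneousComponent_isHomogeneous φ.totalDegree φ).totalDegree_le
  rcases lt_or_eq_of_le hle with h' | h'
  · exact h'
  · exfalso
    have h2 := top_ne_zero13 h
    rw [h'] at h2
    apply h2
    rw [map_sub]
    rw [homogeneousComponent_of_mem (homogeneousComponent_mem φ.totalDegree φ), if_pos rfl]
    exact sub_self A

private lemma totalDegree_mul_eq13 {a c : MvPolynomial (Fin 2) k} (ha : a ≠ 0) (hc : c ≠ 0) :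
    (a * c).totalDegree = a.totalDegree + c.totalDegree := by
  refine le_antisymm (totalDegree_mul a c) ?_
  set p := a.totalDegree with hp
  set q := c.totalDegree with hq
  set A := homogeneousComponent p a with hA
  set B := homogeneousComponent q c with hB
  have hA0 : A ≠ 0 := top_ne_zero13 ha
  have hB0 : B ≠ 0 := top_ne_zero13 hc
  have hAB : A * B ≠ 0 := mul_ne_zero hA0 hB0
  by_contra hcon
  push_neg at hcon
  have key : homogeneousComponent (p + q) (a * c) = A * B := by
    have hsplit : a * c = A * B + ((a - A) * c + A * (c - B)) := by ring
    rw [hsplit, map_add, map_add]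
    have hABhom : (A * B).IsHomogeneous (p + q) :=
      (homogeneousComponent_isHomogeneous p a).mul (homogeneousComponent_isHomogeneous q c)
    have h1 : homogeneousComponent (p + q) (A * B) = A * B := by
      rw [homogeneousComponent_of_mem ((mem_homogeneousSubmodule _ _).mpr hABhom), if_pos rfl]
    have h2 : homogeneousComponent (p + q) ((a - A) * c) = 0 := by
      by_cases hz : a - A = 0
      · rw [hz, zero_mul, map_zero]
      · refine homogeneousComponent_eq_zero _ _ ?_
        have := sub_top_lt13 (φ := a) hz
        rw [← hp, ← hA] at this
        calc ((a - A) * c).totalDegree ≤ (a - A).totalDegree + q := totalDegree_mul _ _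
          _ < p + q := by omega
    have h3 : homogeneousComponent (p + q) (A * (c - B)) = 0 := by
      by_cases hz : c - B = 0
      · rw [hz, mul_zero, map_zero]
      · refine homogeneousComponent_eq_zero _ _ ?_
        have h4 := sub_top_lt13 (φ := c) hz
        rw [← hq, ← hB] at h4
        have h5 : A.totalDegree ≤ p := (homogeneousComponent_isHomogeneous p a).totalDegree_le
        calc (A * (c - B)).totalDegree ≤ A.totalDegree + (c - B).totalDegree :=
              totalDegree_mul _ _
          _ < p + q := by omega
    rw [h1, h2, h3]
    ring
  have hzero : homogeneousComponent (p + q) (a * c) = 0 :=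
    homogeneousComponent_eq_zero _ _ hcon
  rw [key] at hzero
  exact hAB hzero

private lemma totalDegree_le_of_dvd13 {a b : MvPolynomial (Fin 2) k} (h : a ∣ b) (hb : b ≠ 0) :
    a.totalDegree ≤ b.totalDegree := by
  obtain ⟨c, rfl⟩ := h
  have ha : a ≠ 0 := fun h0 => hb (by rw [h0, zero_mul])
  have hc : c ≠ 0 := fun h0 => hb (by rw [h0, mul_zero])
  rw [totalDegree_mul_eq13 ha hc]
  omega

private lemma coeff_pderiv13 (i : Fin 2) (f : MvPolynomial (Fin 2) k) (m : Fin 2 →₀ ℕ) :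
    coeff m (pderiv i f) = ((m i + 1 : ℕ) : k) * coeff (m + Finsupp.single i 1) f := by
  induction f using MvPolynomial.induction_on' with
  | add p q hp hq => simp [map_add, coeff_add, hp, hq, mul_add]
  | monomial s a =>
      rw [pderiv_monomial, coeff_monomial, coeff_monomial]
      by_cases hs : s = m + Finsupp.single i 1
      · subst hs
        rw [if_pos (add_tsub_cancel_right _ _), if_pos rfl]
        rw [Finsupp.add_apply, Finsupp.single_eq_same]
        push_cast
        ring
      · rw [if_neg hs, mul_zero]
        by_cases hsi : s - Finsupp.single i 1 = m
        · rw [if_pos hsi]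
          have hzero : s i = 0 := by
            by_contra hne
            apply hs
            rw [← hsi, tsub_add_cancel_of_le
              (Finsupp.single_le_iff.mpr (Nat.one_le_iff_ne_zero.mpr hne))]
          simp [hzero]
        · rw [if_neg hsi]

private lemma totalDegree_pderiv_lt13 {i : Fin 2} {f : MvPolynomial (Fin 2) k}
    (h : pderiv i f ≠ 0) : (pderiv i f).totalDegree < f.totalDegree := by
  have key : ∀ m ∈ (pderiv i f).support, (m.sum fun _ e => e) + 1 ≤ f.totalDegree := by
    intro m hm
    have h1 : coeff m (pderiv i f) ≠ 0 := mem_support_iff.mp hm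
    rw [coeff_pderiv13] at h1
    have h2 : coeff (m + Finsupp.single i 1) f ≠ 0 := right_ne_zero_of_mul h1
    have h3 := le_totalDegree (mem_support_iff.mpr h2)
    have h4 : ((m + Finsupp.single i 1).sum fun _ e => e) = (m.sum fun _ e => e) + 1 := by
      rw [Finsupp.sum_add_index' (fun _ => rfl) (fun _ _ _ => rfl),
        Finsupp.sum_single_index rfl]
    omega
  obtain ⟨m0, hm0⟩ := support_nonempty.mpr h
  have hpos : 0 < f.totalDegree := by have := key m0 hm0; omega
  rw [MvPolynomial.totalDegree, Finset.sup_lt_iff (by exact_mod_cast hpos)]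
  intro m hm
  have := key m hm
  omega

private lemma totalDegree_pderiv_le13 (i : Fin 2) (f : MvPolynomial (Fin 2) k) :
    (pderiv i f).totalDegree ≤ f.totalDegree := by
  by_cases h : pderiv i f = 0
  · simp [h]
  · exact (totalDegree_pderiv_lt13 h).le

private lemma eq_C_of_pderiv13 [CharZero k] {u : MvPolynomial (Fin 2) k}
    (h : ∀ i, pderiv i u = 0) : u = C (coeff 0 u) := by
  ext m
  rw [coeff_C]
  by_cases hm : (0 : Fin 2 →₀ ℕ) = m
  · rw [if_pos hm, ← hm]
  · rw [if_neg hm]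
    obtain ⟨i, hi⟩ : ∃ i, m i ≠ 0 := by
      by_contra hc
      push_neg at hc
      refine hm ?_
      ext j
      simp [hc j]
    have hle : Finsupp.single i 1 ≤ m := Finsupp.single_le_iff.mpr (Nat.one_le_iff_ne_zero.mpr hi)
    have heq := coeff_pderiv13 i u (m - Finsupp.single i 1)
    rw [h i, coeff_zero] at heq
    rw [tsub_add_cancel_of_le hle] at heq
    rcases mul_eq_zero.mp heq.symm with h' | h'
    · exact absurd (Nat.cast_eq_zero.mp h') (Nat.succ_ne_zero _)
    · exact h'

private lemma eq_C_of_totalDegree_eq_zero13 {x : MvPolynomial (Fin 2) k}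
    (h : x.totalDegree = 0) : x = C (coeff 0 x) := by
  ext m
  rw [coeff_C]
  by_cases hm : (0 : Fin 2 →₀ ℕ) = m
  · rw [if_pos hm, ← hm]
  · rw [if_neg hm]
    by_contra hc
    have hmem := mem_support_iff.mpr hc
    have hall := (totalDegree_eq_zero_iff (σ := Fin 2) x).mp h m hmem
    refine hm ?_
    ext j
    simp [hall j]

private lemma isUnit_of_td_zero13 {x : MvPolynomial (Fin 2) k} (h : x.totalDegree = 0)
    (hx : x ≠ 0) : IsUnit x := by
  rw [eq_C_of_totalDegree_eq_zero13 h]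
  refine IsUnit.map (C : k →+* MvPolynomial (Fin 2) k) (isUnit_iff_ne_zero.mpr ?_)
  intro h0
  exact hx (by rw [eq_C_of_totalDegree_eq_zero13 h, h0, map_zero])

private lemma prime_linear13 {l : MvPolynomial (Fin 2) k} (h1 : l.IsHomogeneous 1) (h0 : l ≠ 0) :
    Prime l := by
  have htd : l.totalDegree = 1 := h1.totalDegree h0
  rw [← UniqueFactorizationMonoid.irreducible_iff_prime]
  constructor
  · intro hu
    have := totalDegree_le_of_dvd13 hu.dvd one_ne_zero
    rw [htd, totalDegree_one] at this
    omega
  · intro x y hxy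
    have hx0 : x ≠ 0 := by rintro rfl; rw [zero_mul] at hxy; exact h0 hxy
    have hy0 : y ≠ 0 := by rintro rfl; rw [mul_zero] at hxy; exact h0 hxy
    have hsum : x.totalDegree + y.totalDegree = 1 := by
      rw [← totalDegree_mul_eq13 hx0 hy0, ← hxy, htd]
    rcases Nat.eq_zero_or_pos x.totalDegree with hx | hx
    · exact Or.inl (isUnit_of_td_zero13 hx hx0)
    · exact Or.inr (isUnit_of_td_zero13 (by omega) hy0)

private lemma pow_dvd_pderiv13 {l F : MvPolynomial (Fin 2) k} {n : ℕ} (hn : 1 ≤ n)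
    (h : l ^ n ∣ F) (i : Fin 2) : l ^ (n - 1) ∣ pderiv i F := by
  obtain ⟨q, rfl⟩ := h
  rw [pderiv_mul, pderiv_pow]
  refine dvd_add ?_ ?_
  · have heq : (n : MvPolynomial (Fin 2) k) * l ^ (n - 1) * pderiv i l * q
        = l ^ (n - 1) * ((n : MvPolynomial (Fin 2) k) * pderiv i l * q) := by ring
    rw [heq]
    exact Dvd.intro _ rfl
  · have heq : l ^ n * pderiv i q = l ^ (n - 1) * (l ^ (n - (n - 1)) * pderiv i q) := by
      rw [← mul_assoc, ← pow_add]
      congr 2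
      omega
    rw [heq]
    exact Dvd.intro _ rfl

private lemma prod_pow_dvd13 {ι : Type*} [DecidableEq ι] (S : Finset ι)
    (p : ι → MvPolynomial (Fin 2) k) (e : ℕ) (W : MvPolynomial (Fin 2) k)
    (hp : ∀ i ∈ S, Prime (p i))
    (hnd : ∀ i ∈ S, ∀ j ∈ S, i ≠ j → ¬ p i ∣ p j)
    (hW : ∀ i ∈ S, p i ^ e ∣ W) : (∏ i ∈ S, p i ^ e) ∣ W := by
  induction S using Finset.induction_on with
  | empty => simp
  | insert a S ha ih =>
      rw [Finset.prod_insert ha]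
      obtain ⟨c, hc⟩ := ih (fun i hi => hp i (Finset.mem_insert_of_mem hi))
        (fun i hi j hj hij =>
          hnd i (Finset.mem_insert_of_mem hi) j (Finset.mem_insert_of_mem hj) hij)
        (fun i hi => hW i (Finset.mem_insert_of_mem hi))
      have hpa : Prime (p a) := hp a (Finset.mem_insert_self a S)
      have hnotdvd : ¬ p a ∣ ∏ i ∈ S, p i ^ e := by
        intro hdvd
        obtain ⟨j, hj, hdvd'⟩ := (hpa.dvd_finset_prod_iff _).mp hdvd
        have : p a ∣ p j := hpa.dvd_of_dvd_pow hdvd'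
        exact hnd a (Finset.mem_insert_self a S) j (Finset.mem_insert_of_mem hj)
          (fun h => ha (h ▸ hj)) this
      have h2 : p a ^ e ∣ (∏ i ∈ S, p i ^ e) * c := by
        rw [← hc]; exact hW a (Finset.mem_insert_self a S)
      have h3 : p a ^ e ∣ c := hpa.pow_dvd_of_dvd_mul_left e hnotdvd h2
      rw [hc, mul_comm (∏ i ∈ S, p i ^ e) c]
      exact mul_dvd_mul h3 (dvd_refl _) |>.trans (by rw [mul_comm])

end Stmt13Aux

/-- Let `k` be algebraically closed of characteristic 0, `d ≥ 2`, and let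
`f₁, f₂` be binary forms of degree `d` such that every linear combination `αf₁ + βf₂` is
divisible by the `([d/2]+1)`-st power of some nonzero linear form. Then a single nonzero
linear form `l` exists with `l^([d/2]+1)` dividing both `f₁` and `f₂`. -/
theorem stmt_13 (k : Type*) [Field k] [IsAlgClosed k] [CharZero k] (d : ℕ) (hd : 2 ≤ d)
    (f₁ f₂ : MvPolynomial (Fin 2) k)
    (hf₁ : f₁.IsHomogeneous d) (hf₂ : f₂.IsHomogeneous d)
    (h : ∀ α β : k, ∃ l : MvPolynomial (Fin 2) k,
        l.IsHomogeneous 1 ∧ l ≠ 0 ∧ l ^ (d / 2 + 1) ∣ (C α * f₁ + C β * f₂)) :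
    ∃ l : MvPolynomial (Fin 2) k,
      l.IsHomogeneous 1 ∧ l ≠ 0 ∧ l ^ (d / 2 + 1) ∣ f₁ ∧ l ^ (d / 2 + 1) ∣ f₂ := by
  classical
  -- trivial cases where one of the forms is zero
  by_cases hf10 : f₁ = 0
  · obtain ⟨l, hl1, hl0, hld⟩ := h 0 1
    refine ⟨l, hl1, hl0, by simp [hf10], ?_⟩
    simpa [hf10] using hld
  by_cases hf20 : f₂ = 0
  · obtain ⟨l, hl1, hl0, hld⟩ := h 1 0
    exact ⟨l, hl1, hl0, by simpa [hf20] using hld, by simp [hf20]⟩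
  -- the case where one linear form works for two distinct members of the pencil
  by_cases hsh : ∃ l : MvPolynomial (Fin 2) k, l.IsHomogeneous 1 ∧ l ≠ 0 ∧
      ∃ s t : k, s ≠ t ∧ l ^ (d / 2 + 1) ∣ (f₁ + C s * f₂) ∧ l ^ (d / 2 + 1) ∣ (f₁ + C t * f₂)
  · obtain ⟨l, hl1, hl0, s, t, hst, hds, hdt⟩ := hsh
    have hstne : s - t ≠ 0 := sub_ne_zero.mpr hst
    have hdvdsub : l ^ (d / 2 + 1) ∣ C (s - t) * f₂ := by
      have heq : C (s - t) * f₂ = (f₁ + C s * f₂) - (f₁ + C t * f₂) := by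
        rw [map_sub]; ring
      rw [heq]
      exact dvd_sub hds hdt
    have hdf2 : l ^ (d / 2 + 1) ∣ f₂ := by
      have h2 := hdvdsub.mul_left (C (s - t)⁻¹)
      rwa [← mul_assoc, ← map_mul, inv_mul_cancel₀ hstne, map_one, one_mul] at h2
    have hdf1 : l ^ (d / 2 + 1) ∣ f₁ := by
      have h2 := dvd_sub hds (hdf2.mul_left (C s))
      rwa [add_sub_cancel_right] at h2
    exact ⟨l, hl1, hl0, hdf1, hdf2⟩
  -- now set up the pencil members indexed by the natural numbers
  have hLspec : ∀ n : ℕ, ((h 1 ((n : k))).choose.IsHomogeneous 1 ∧ (h 1 ((n : k))).choose ≠ 0 ∧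
      (h 1 ((n : k))).choose ^ (d / 2 + 1) ∣ (f₁ + C ((n : k)) * f₂)) := by
    intro n
    obtain ⟨h1, h2, h3⟩ := (h 1 ((n : k))).choose_spec
    exact ⟨h1, h2, by simpa using h3⟩
  set L : ℕ → MvPolynomial (Fin 2) k := fun n => (h 1 ((n : k))).choose with hL
  have hpairwise : ∀ i j : ℕ, i ≠ j → ¬ L i ∣ L j := by
    intro i j hij hdvd
    have hprimei := prime_linear13 (hLspec i).1 (hLspec i).2.1
    have hprimej := prime_linear13 (hLspec j).1 (hLspec j).2.1
    have hassoc : Associated (L i) (L j) :=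
      hprimei.irreducible.associated_of_dvd hprimej.irreducible hdvd
    have hdvd2 : L i ^ (d / 2 + 1) ∣ f₁ + C ((j : k)) * f₂ :=
      (hassoc.pow_pow (n := d / 2 + 1)).dvd.trans (hLspec j).2.2
    exact hsh ⟨L i, (hLspec i).1, (hLspec i).2.1, (i : k), (j : k),
      fun hc => hij (Nat.cast_injective hc), (hLspec i).2.2, hdvd2⟩
  -- Wronskian case split
  by_cases hW : ∀ i : Fin 2, f₁ * pderiv i f₂ = f₂ * pderiv i f₁
  · -- then f₂ is a multiple of f₁
    obtain ⟨u, v, g, hrel, hgu, hgv⟩ :=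
      UniqueFactorizationMonoid.exists_reduced_factors f₁ hf10 f₂
    have hg0 : g ≠ 0 := by rintro rfl; rw [zero_mul] at hgu; exact hf10 hgu.symm
    have hu0 : u ≠ 0 := by rintro rfl; rw [mul_zero] at hgu; exact hf10 hgu.symm
    have key : ∀ j : Fin 2, u * pderiv j v = v * pderiv j u := by
      intro j
      have hWj := hW j
      rw [← hgu, ← hgv, pderiv_mul, pderiv_mul] at hWj
      have hgg : g * g * (u * pderiv j v) = g * g * (v * pderiv j u) := by
        linear_combination hWj
      exact mul_left_cancel₀ (mul_ne_zero hg0 hg0) hgg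
    have hpdu : ∀ j : Fin 2, pderiv j u = 0 := by
      intro j
      by_contra hne
      have hdvd : u ∣ v * pderiv j u := ⟨pderiv j v, (key j).symm⟩
      have hdvd2 : u ∣ pderiv j u := hrel.dvd_of_dvd_mul_left hdvd
      have hle := totalDegree_le_of_dvd13 hdvd2 hne
      have hlt := totalDegree_pderiv_lt13 hne
      omega
    have hu_eq : u = C (coeff 0 u) := eq_C_of_pderiv13 hpdu
    set c := coeff 0 u with hc
    have hc0 : c ≠ 0 := by intro h0; apply hu0; rw [hu_eq, h0, map_zero]
    have hf21 : f₂ = f₁ * (C c⁻¹ * v) := by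
      have habs : g * C c * (C c⁻¹ * v) = g * v := by
        rw [mul_assoc, ← mul_assoc (C c), ← map_mul, mul_inv_cancel₀ hc0, map_one, one_mul]
      calc f₂ = g * v := hgv.symm
        _ = g * C c * (C c⁻¹ * v) := habs.symm
        _ = f₁ * (C c⁻¹ * v) := by rw [← hu_eq, hgu]
    obtain ⟨l, hl1, hl0, hld⟩ := h 1 0
    have hldf1 : l ^ (d / 2 + 1) ∣ f₁ := by simpa using hld
    refine ⟨l, hl1, hl0, hldf1, ?_⟩
    rw [hf21]
    exact hldf1.mul_right _
  · -- counting case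
    push_neg at hW
    obtain ⟨i, hWi⟩ := hW
    set W := f₁ * pderiv i f₂ - f₂ * pderiv i f₁ with hWdef
    have hWne : W ≠ 0 := sub_ne_zero.mpr hWi
    have hdvdW : ∀ n : ℕ, L n ^ (d / 2) ∣ W := by
      intro n
      have hFdvd := (hLspec n).2.2
      have h1 : L n ^ (d / 2) ∣ (f₁ + C ((n : k)) * f₂) :=
        (pow_dvd_pow _ (by omega)).trans hFdvd
      have h2 : L n ^ (d / 2) ∣ pderiv i (f₁ + C ((n : k)) * f₂) := by
        have h3 := pow_dvd_pderiv13 (by omega) hFdvd i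
        simpa only [Nat.add_sub_cancel] using h3
      have hWeq : W = (f₁ + C ((n : k)) * f₂) * pderiv i f₂
          - f₂ * pderiv i (f₁ + C ((n : k)) * f₂) := by
        rw [map_add, pderiv_C_mul]
        ring
      rw [hWeq]
      exact dvd_sub (h1.mul_right _) (h2.mul_left _)
    have hprod := prod_pow_dvd13 (Finset.range (2 * d + 2)) (fun n => L n) (d / 2) W
      (fun n _ => prime_linear13 (hLspec n).1 (hLspec n).2.1)
      (fun a _ b _ hab => hpairwise a b hab)
      (fun n _ => hdvdW n)
    have hle := totalDegree_le_of_dvd13 hprod hWne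
    have hhomprod : (∏ n ∈ Finset.range (2 * d + 2), L n ^ (d / 2)).IsHomogeneous
        ((2 * d + 2) * (d / 2)) := by
      have hpr := MvPolynomial.IsHomogeneous.prod (Finset.range (2 * d + 2))
        (fun n => L n ^ (d / 2)) (fun _ => 1 * (d / 2))
        (fun n _ => (hLspec n).1.pow (d / 2))
      simpa [Finset.sum_const, mul_comm] using hpr
    have hprodne : (∏ n ∈ Finset.range (2 * d + 2), L n ^ (d / 2)) ≠ 0 :=
      Finset.prod_ne_zero_iff.mpr (fun n _ => pow_ne_zero _ (hLspec n).2.1)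
    have htdprod := hhomprod.totalDegree hprodne
    rw [htdprod] at hle
    have hWbound : W.totalDegree ≤ 2 * d := by
      refine (totalDegree_sub _ _).trans (max_le ?_ ?_)
      · refine (totalDegree_mul _ _).trans ?_
        have b1 := hf₁.totalDegree_le
        have b2 := (totalDegree_pderiv_le13 i f₂).trans hf₂.totalDegree_le
        omega
      · refine (totalDegree_mul _ _).trans ?_
        have b1 := hf₂.totalDegree_le
        have b2 := (totalDegree_pderiv_le13 i f₁).trans hf₁.totalDegree_le
        omega
    have hge : 2 * d + 2 ≤ (2 * d + 2) * (d / 2) :=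
      Nat.le_mul_of_pos_right _ (by omega)
    omega
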